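/- Let A be a unital C*-algebra, π : Mₙ(ℂ) → A a *-homomorphism and γ : Mₙ(ℂ) → A a *-antihomomorphism with elementwise commuting ranges, and set q := n^{-1} Σ_{i,j} γ(e_{ij}) π(e_{ji}). Then for every matrix a ∈ Mₙ(ℂ): q·γ(a) = q·π(a) and γ(a)·q = π(a)·q. -/

import Mathlib

/-- Let `A` be a unital C*-algebra, `π : Mₙ(ℂ) → A` a *-homomorphism and
`γ : Mₙ(ℂ) → A` a *-antihomomorphism with elementwise commuting ranges, and
`q := n⁻¹ Σ_{i,j} γ(e i j) π(e j i)`.  Then for every matrix `a ∈ Mₙ(ℂ)`: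
`q·γ(a) = q·π(a)` and `γ(a)·q = π(a)·q`. -/
theorem stmt5 {A : Type*} [CStarAlgebra A] {n : ℕ}
    (π : Matrix (Fin n) (Fin n) ℂ →⋆ₙₐ[ℂ] A)
    (γ : Matrix (Fin n) (Fin n) ℂ →ₗ[ℂ] A)
    (hγmul : ∀ x y : Matrix (Fin n) (Fin n) ℂ, γ (x * y) = γ y * γ x)
    (hγstar : ∀ x : Matrix (Fin n) (Fin n) ℂ, γ (star x) = star (γ x))
    (hcomm : ∀ x y : Matrix (Fin n) (Fin n) ℂ, γ x * π y = π y * γ x)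
    (E : Fin n → Fin n → Matrix (Fin n) (Fin n) ℂ)
    (hE : ∀ i j, E i j = Matrix.single i j 1)
    (q : A)
    (hq : q = (n : ℂ)⁻¹ • ∑ i, ∑ j, γ (E i j) * π (E j i)) :
    ∀ a : Matrix (Fin n) (Fin n) ℂ, q * γ a = q * π a ∧ γ a * q = π a * q := by
  have hEmul : ∀ (i j k l : Fin n), E i j * E k l = if j = k then E i l else 0 := by
    intro i j k l
    simp only [hE]
    split_ifs with h
    · subst h; simp
    · exact Matrix.single_mul_single_of_ne (c := (1 : ℂ)) i j k h 1
  -- key lemmas for basis matrices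
  have key1 : ∀ k l, q * γ (E k l) = q * π (E k l) := by
    intro k l
    rw [hq, smul_mul_assoc, smul_mul_assoc]
    congr 1
    rw [Finset.sum_mul, Finset.sum_mul]
    have L : ∀ i j, γ (E i j) * π (E j i) * γ (E k l)
        = if l = i then γ (E k j) * π (E j l) else 0 := by
      intro i j
      rw [mul_assoc, ← hcomm, ← mul_assoc, ← hγmul, hEmul]
      split_ifs with h
      · subst h; rfl
      · rw [map_zero, zero_mul]
      
    have R : ∀ i j, γ (E i j) * (π (E j i) * π (E k l))
        = if i = k then γ (E k j) * π (E j l) else 0 := by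
      intro i j
      rw [← map_mul, hEmul]
      split_ifs with h
      · subst h; rfl
      · rw [map_zero, mul_zero]
    calc ∑ i, (∑ j, γ (E i j) * π (E j i)) * γ (E k l)
        = ∑ i, if l = i then ∑ j, γ (E k j) * π (E j l) else 0 := by
          refine Finset.sum_congr rfl fun i _ => ?_
          rw [Finset.sum_mul]
          simp_rw [L]
          split_ifs with h <;> simp
      _ = ∑ j, γ (E k j) * π (E j l) := by simp
      _ = ∑ i, if i = k then ∑ j, γ (E k j) * π (E j l) else 0 := by simp
      _ = ∑ i, (∑ j, γ (E i j) * π (E j i)) * π (E k l) := by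
          refine Finset.sum_congr rfl fun i _ => ?_
          rw [Finset.sum_mul]
          simp_rw [mul_assoc, R]
          split_ifs with h <;> simp
  have key2 : ∀ k l, γ (E k l) * q = π (E k l) * q := by
    intro k l
    rw [hq, mul_smul_comm, mul_smul_comm]
    congr 1
    rw [Finset.mul_sum, Finset.mul_sum]
    have L : ∀ i j, γ (E k l) * (γ (E i j) * π (E j i))
        = if j = k then γ (E i l) * π (E j i) else 0 := by
      intro i j
      rw [← mul_assoc, ← hγmul, hEmul]
      split_ifs with h
      · rfl
      · rw [map_zero, zero_mul]
    have R : ∀ i j, π (E k l) * (γ (E i j) * π (E j i))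
        = if l = j then γ (E i j) * π (E k i) else 0 := by
      intro i j
      rw [← mul_assoc, ← hcomm, mul_assoc, ← map_mul, hEmul]
      split_ifs with h
      · rfl
      · rw [map_zero, mul_zero]
    calc ∑ i, γ (E k l) * ∑ j, γ (E i j) * π (E j i)
        = ∑ i, γ (E i l) * π (E k i) := by
          refine Finset.sum_congr rfl fun i _ => ?_
          rw [Finset.mul_sum]
          simp_rw [L]
          simp
      _ = ∑ i, π (E k l) * ∑ j, γ (E i j) * π (E j i) := by
          refine Finset.sum_congr rfl fun i _ => ?_
          rw [Finset.mul_sum]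
          simp_rw [R]
          simp
  intro a
  have ha : a = ∑ k, ∑ l, a k l • E k l := by
    simp_rw [hE, Matrix.smul_single, smul_eq_mul, mul_one]
    exact Matrix.matrix_eq_sum_single a
  constructor
  · rw [ha, map_sum, map_sum, Finset.mul_sum, Finset.mul_sum]
    refine Finset.sum_congr rfl fun k _ => ?_
    rw [map_sum, map_sum, Finset.mul_sum, Finset.mul_sum]
    refine Finset.sum_congr rfl fun l _ => ?_
    rw [map_smul, map_smul, mul_smul_comm, mul_smul_comm, key1]
  · rw [ha, map_sum, map_sum, Finset.sum_mul, Finset.sum_mul]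
    refine Finset.sum_congr rfl fun k _ => ?_
    rw [map_sum, map_sum, Finset.sum_mul, Finset.sum_mul]
    refine Finset.sum_congr rfl fun l _ => ?_
    rw [map_smul, map_smul, smul_mul_assoc, smul_mul_assoc, key2]
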